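/- Given the loop functional H for the doubling loop, H(X)(b,x) = 1 + [b ≠ 1]·(1 + [x > 0]·2x) + [b = 1]·(1 + ½·(1 + X(0,2x)) + ½·(1 + X(1,2x))), the sequence I_n(b,x) = 1 + [b ≠ 1]·(1 + [x>0]·2x) + [b = 1]·(7 − 5/2^n + n·[x>0]·2x) satisfies H(0) = I_0 and H(I_n) = I_{n+1}; consequently lfp H(1,x) = ∞ whenever x > 0. -/

import Mathlib

/-- Characteristic functional of the doubling loop
`while (b = 1) { b :≈ ½⟨0⟩ + ½⟨1⟩; x := 2x }` with respect to the continuation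
`1 + [x > 0]·2x`.  States are pairs `(b, x)`. -/
noncomputable def dblH (X : ℤ × ℤ → ENNReal) : ℤ × ℤ → ENNReal :=
  fun p => 1 + if p.1 ≠ 1 then
      1 + (if 0 < p.2 then 2 * (p.2.toNat : ENNReal) else 0)
    else
      1 + (1 / 2) * (1 + X (0, 2 * p.2)) + (1 / 2) * (1 + X (1, 2 * p.2))

/-- `I_n(b,x) = 1 + [b ≠ 1]·(1 + [x>0]·2x) + [b = 1]·(7 − 5/2^n + n·[x>0]·2x)`. -/
noncomputable def dblI (n : ℕ) : ℤ × ℤ → ENNReal :=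
  fun p => 1 + if p.1 ≠ 1 then
      1 + (if 0 < p.2 then 2 * (p.2.toNat : ENNReal) else 0)
    else
      7 - 5 / 2 ^ n + (n : ENNReal) * (if 0 < p.2 then 2 * (p.2.toNat : ENNReal) else 0)

lemma dbl_five_le (n : ℕ) : (5:ENNReal)/2^n ≤ 7 := by
  calc (5:ENNReal)/2^n ≤ 5/1 := by
        apply ENNReal.div_le_div_left
        exact_mod_cast Nat.one_le_two_pow
    _ ≤ 7 := by norm_num

lemma dbl_key (n : ℕ) (s : ENNReal) :
    1 + (1 + 2⁻¹ * (1 + (1 + (1 + 2*s))) +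
      2⁻¹ * (1 + (1 + (7 - 5/2^n + (n:ENNReal)*(2*s))))) =
    1 + (7 - 5/2^(n+1) + ((n:ENNReal)+1)*s) := by
  have h1 : (2:ENNReal)⁻¹ * 2 = 1 :=
    ENNReal.inv_mul_cancel two_ne_zero ENNReal.ofNat_ne_top
  set u : ENNReal := 2⁻¹ with hu
  set c : ENNReal := 7 - 5/2^n with hc
  set a : ENNReal := 5/2^(n+1) with ha
  have hcb : c + 5/2^n = 7 := tsub_add_cancel_of_le (dbl_five_le n)
  have hb : (5:ENNReal)/2^n = 2 * a := by
    rw [ha, pow_succ, div_eq_mul_inv, div_eq_mul_inv,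
      ENNReal.mul_inv (Or.inr (by norm_num)) (Or.inr (by norm_num)),
      show (2:ENNReal) * (5 * ((2^n)⁻¹ * 2⁻¹)) = (2⁻¹*2) * (5 * (2^n)⁻¹) by ring,
      h1, one_mul]
  have hca : 7 - 5/2^(n+1) = c + a := by
    have h7 : c + a + a = 7 := by rw [add_assoc, show a + a = 2*a by ring, ← hb, hcb]
    have : (7 - 5/2^(n+1)) + a = (c + a) + a := by
      rw [h7, tsub_add_cancel_of_le (dbl_five_le (n+1))]
    exact WithTop.add_right_cancel
      ((lt_of_le_of_lt (dbl_five_le (n+1)) (by norm_num : (7:ENNReal) < ⊤)).ne) this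
  rw [hca]
  calc 1 + (1 + u * (1 + (1 + (1 + 2*s))) + u * (1 + (1 + (c + (n:ENNReal)*(2*s)))))
      = 1 + 1 + u*5 + u*c + u*(2*s) + u*(2*((n:ENNReal)*s)) := by ring
    _ = 1 + u*2 + u*5 + u*c + u*(2*s) + u*(2*((n:ENNReal)*s)) := by rw [h1]
    _ = 1 + u*(c + 5/2^n) + u*c + u*(2*s) + u*(2*((n:ENNReal)*s)) := by rw [hcb]; ring
    _ = 1 + (u*2)*c + (u*2)*a + (u*2)*s + (u*2)*((n:ENNReal)*s) := by rw [hb]; ring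
    _ = 1 + (c + a + ((n:ENNReal)+1)*s) := by rw [h1]; ring

lemma dbl_step0 : dblH 0 = dblI 0 := by
  funext ⟨b, x⟩
  by_cases hb : b = 1
  · simp only [dblH, dblI, hb]
    norm_num
    rw [show (7:ENNReal) - 5 = 2 from
      ENNReal.sub_eq_of_eq_add (by norm_num) (by norm_num)]
    rw [add_assoc (1:ENNReal) 2⁻¹, ENNReal.inv_two_add_inv_two]
    norm_num
  · simp [dblH, dblI, hb]

lemma dbl_step (n : ℕ) : dblH (dblI n) = dblI (n + 1) := by
  funext ⟨b, x⟩
  by_cases hb : b = 1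
  · by_cases hx : 0 < x
    · have h2x : ((2*x).toNat : ENNReal) = 2 * (x.toNat : ENNReal) := by
        rw [show (2*x).toNat = 2*x.toNat by omega]; push_cast; ring
      simp only [dblH, dblI, hb]
      simp [hx, h2x]
      have := dbl_key n (2 * (x.toNat : ENNReal))
      exact WithTop.add_left_cancel ENNReal.one_ne_top this
    · simp only [dblH, dblI, hb]
      simp [hx, show ¬ (0 < 2*x) by omega]
      simpa using dbl_key n 0
  · simp [dblH, dblI, hb]

/-- the sequence `I_n` satisfies `H(0) = I_0` and
`H(I_n) = I_{n+1}`; consequently `lfp H (1, x) = ∞` whenever `x > 0`. -/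
theorem doubling_loop_infinite_runtime :
    dblH 0 = dblI 0 ∧ (∀ n, dblH (dblI n) = dblI (n + 1)) ∧
    ∀ x : ℤ, 0 < x → (⨆ n, dblH^[n] 0) (1, x) = ⊤ := by
  refine ⟨dbl_step0, dbl_step, ?_⟩
  intro x hx
  have hiter : ∀ n, dblH^[n+1] 0 = dblI n := by
    intro n
    induction n with
    | zero => simpa using dbl_step0
    | succ n ih => rw [Function.iterate_succ_apply', ih, dbl_step]
  have hlow : ∀ n : ℕ, (n : ENNReal) ≤ dblH^[n+1] 0 (1, x) := by
    intro n
    rw [hiter]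
    simp [dblI, hx]
    have h1 : (1:ENNReal) ≤ 2 * (x.toNat : ENNReal) := by
      have : 1 ≤ x.toNat := by omega
      calc (1:ENNReal) ≤ (x.toNat : ENNReal) := by exact_mod_cast this
        _ ≤ 2 * (x.toNat : ENNReal) := by
          nth_rewrite 1 [← one_mul ((x.toNat : ENNReal))]
          gcongr; norm_num
    calc (n : ENNReal) = n * 1 := (mul_one _).symm
      _ ≤ (n : ENNReal) * (2 * (x.toNat : ENNReal)) := by gcongr
      _ ≤ 1 + (7 - 5/2^n + (n : ENNReal) * (2 * (x.toNat : ENNReal))) := by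
          rw [show (1:ENNReal) + (7 - 5/2^n + (n:ENNReal) * (2*(x.toNat:ENNReal)))
            = (n:ENNReal) * (2*(x.toNat:ENNReal)) + (1 + (7 - 5/2^n)) by ring]
          exact le_add_of_nonneg_right zero_le
  rw [iSup_apply]
  refine top_unique ?_
  rw [← ENNReal.iSup_natCast]
  exact iSup_le fun n => (hlow n).trans (by simpa using le_iSup (fun m => dblH^[m] 0 (1, x)) (n+1))
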